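/- Let 0 < a ≤ x_i ≤ b ≤ 1/2 and w_i > 0 with ∑ w_i = 1. Set J = ∑ w_i x_i² − (∑ w_i x_i)². Then exp( (1/2 − b)/(b(1−b))² · J ) · ∏ (x_i/(1−x_i))^{w_i} ≤ (∑ w_i x_i)/(∑ w_i (1−x_i)) ≤ exp( (1/2 − a)/(a(1−a))² · J ) · ∏ (x_i/(1−x_i))^{w_i}. -/

import Mathlib

lemma kf_hderiv1 {s c t : ℝ} (h0 : 0 < t) (h1 : t < 1) :
    HasDerivAt (fun u => s * (Real.log u - Real.log (1 - u)) - c / 2 * u ^ 2)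
      (s * (t⁻¹ + (1 - t)⁻¹) - c * t) t := by
  have hlog : HasDerivAt Real.log t⁻¹ t := Real.hasDerivAt_log h0.ne'
  have hsub : HasDerivAt (fun u : ℝ => 1 - u) (-1) t := by
    simpa using (hasDerivAt_id t).const_sub 1
  have hlog2 : HasDerivAt (fun u : ℝ => Real.log (1 - u)) ((1 - t)⁻¹ * -1) t :=
    (Real.hasDerivAt_log (by linarith)).comp t hsub
  have hsq : HasDerivAt (fun u : ℝ => c / 2 * u ^ 2) (c / 2 * (2 * t)) t := by
    simpa using (hasDerivAt_pow 2 t).const_mul (c / 2)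
  have := ((hlog.sub hlog2).const_mul s).sub hsq
  refine this.congr_deriv ?_
  ring

lemma kf_hderiv2 {s c t : ℝ} (h0 : 0 < t) (h1 : t < 1) :
    HasDerivAt (fun u : ℝ => s * (u⁻¹ + (1 - u)⁻¹) - c * u)
      (s * (-(t ^ 2)⁻¹ + ((1 - t) ^ 2)⁻¹) - c) t := by
  have h1' : (1 : ℝ) - t ≠ 0 := by linarith
  have hA : HasDerivAt (fun u : ℝ => u⁻¹) (-(t ^ 2)⁻¹) t := hasDerivAt_inv h0.ne'
  have hsub : HasDerivAt (fun u : ℝ => 1 - u) (-1) t := by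
    simpa using (hasDerivAt_id t).const_sub 1
  have hB : HasDerivAt (fun u : ℝ => (1 - u)⁻¹) (-(((1 - t) ^ 2)⁻¹) * -1) t :=
    (hasDerivAt_inv h1').comp t hsub
  have := ((hA.add hB).const_mul s).sub ((hasDerivAt_id t).const_mul c)
  refine this.congr_deriv ?_
  ring

lemma kf_convex_aux {a b s c : ℝ} (ha : 0 < a) (hb1 : b < 1)
    (h : ∀ t ∈ Set.Ioo a b, 0 ≤ s * (-(t ^ 2)⁻¹ + ((1 - t) ^ 2)⁻¹) - c) :
    ConvexOn ℝ (Set.Icc a b)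
      (fun u => s * (Real.log u - Real.log (1 - u)) - c / 2 * u ^ 2) := by
  apply convexOn_of_hasDerivWithinAt2_nonneg (convex_Icc a b)
    (f' := fun t => s * (t⁻¹ + (1 - t)⁻¹) - c * t)
    (f'' := fun t => s * (-(t ^ 2)⁻¹ + ((1 - t) ^ 2)⁻¹) - c)
  · intro t ht
    exact (kf_hderiv1 (ha.trans_le ht.1) (lt_of_le_of_lt ht.2 hb1)).continuousAt.continuousWithinAt
  · rw [interior_Icc]
    intro t ht
    exact (kf_hderiv1 (ha.trans ht.1) (ht.2.trans hb1)).hasDerivWithinAt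
  · rw [interior_Icc]
    intro t ht
    exact (kf_hderiv2 (ha.trans ht.1) (ht.2.trans hb1)).hasDerivWithinAt
  · rw [interior_Icc]
    exact h

lemma kf_mono {a b : ℝ} (ha : 0 < a) (hb1 : b < 1) :
    ∀ t ∈ Set.Ioo a b,
      (-(a ^ 2)⁻¹ + ((1 - a) ^ 2)⁻¹) ≤ -(t ^ 2)⁻¹ + ((1 - t) ^ 2)⁻¹ ∧
      -(t ^ 2)⁻¹ + ((1 - t) ^ 2)⁻¹ ≤ (-(b ^ 2)⁻¹ + ((1 - b) ^ 2)⁻¹) := by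
  intro t ht
  have ht0 : 0 < t := ha.trans ht.1
  have ht1 : t < 1 := ht.2.trans hb1
  constructor
  · have h1 : (t ^ 2)⁻¹ ≤ (a ^ 2)⁻¹ := by gcongr; exact ht.1.le
    have h2 : ((1 - a) ^ 2)⁻¹ ≤ ((1 - t) ^ 2)⁻¹ := by
      gcongr <;> nlinarith [ht.1.le, ht.2.le]
    linarith
  · have h1 : (b ^ 2)⁻¹ ≤ (t ^ 2)⁻¹ := by gcongr; exact ht.2.le
    have h2 : ((1 - t) ^ 2)⁻¹ ≤ ((1 - b) ^ 2)⁻¹ := by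
      gcongr <;> nlinarith [ht.1.le, ht.2.le]
    linarith

theorem ky_fan_two_sided_refinement
    (n : ℕ) (a b : ℝ) (ha : 0 < a) (hab : a ≤ b) (hb : b ≤ 1 / 2)
    (w x : Fin n → ℝ)
    (hw : ∀ i, 0 < w i) (hws : ∑ i, w i = 1)
    (hx : ∀ i, x i ∈ Set.Icc a b) :
    Real.exp ((1 / 2 - b) / (b * (1 - b)) ^ 2 *
          (∑ i, w i * (x i) ^ 2 - (∑ i, w i * x i) ^ 2)) *
        ∏ i, (x i / (1 - x i)) ^ w i ≤
      (∑ i, w i * x i) / (∑ i, w i * (1 - x i)) ∧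
    (∑ i, w i * x i) / (∑ i, w i * (1 - x i)) ≤
      Real.exp ((1 / 2 - a) / (a * (1 - a)) ^ 2 *
          (∑ i, w i * (x i) ^ 2 - (∑ i, w i * x i) ^ 2)) *
        ∏ i, (x i / (1 - x i)) ^ w i := by
  have hb0 : 0 < b := ha.trans_le hab
  have hb1 : b < 1 := by linarith
  have ha1 : a < 1 := by linarith
  have hx0 : ∀ i, 0 < x i := fun i => ha.trans_le (hx i).1
  have hx1 : ∀ i, x i < 1 := fun i => lt_of_le_of_lt (hx i).2 hb1
  set m : ℝ := ∑ i, w i * x i with hm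
  set S : ℝ := ∑ i, w i * (Real.log (x i) - Real.log (1 - x i)) with hS
  set Q : ℝ := ∑ i, w i * (x i) ^ 2 with hQ
  -- bounds on m
  have ham : a ≤ m := by
    calc a = ∑ i, w i * a := by rw [← Finset.sum_mul, hws, one_mul]
    _ ≤ m := Finset.sum_le_sum fun i _ => by
        have := (hx i).1; nlinarith [hw i]
  have hmb : m ≤ b := by
    calc m ≤ ∑ i, w i * b := Finset.sum_le_sum fun i _ => by
              have := (hx i).2; nlinarith [hw i]
    _ = b := by rw [← Finset.sum_mul, hws, one_mul]
  have hm0 : 0 < m := ha.trans_le ham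
  have hm1 : m < 1 := lt_of_le_of_lt hmb hb1
  -- denominator
  have hden : ∑ i, w i * (1 - x i) = 1 - m := by
    simp only [mul_sub, mul_one, Finset.sum_sub_distrib, hws, hm]
  -- product as exponential
  have hprod : ∏ i, (x i / (1 - x i)) ^ w i = Real.exp S := by
    rw [hS, Real.exp_sum]
    refine Finset.prod_congr rfl fun i _ => ?_
    have h1 : (0 : ℝ) < x i / (1 - x i) := by
      apply div_pos (hx0 i); linarith [hx1 i]
    rw [Real.rpow_def_of_pos h1, Real.log_div (hx0 i).ne' (by linarith [hx1 i] : (1:ℝ) - x i ≠ 0)]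
    ring_nf
  -- quotient as exponential
  have hquot : m / (∑ i, w i * (1 - x i)) = Real.exp (Real.log m - Real.log (1 - m)) := by
    rw [hden, ← Real.log_div hm0.ne' (by linarith : (1:ℝ) - m ≠ 0),
      Real.exp_log (div_pos hm0 (by linarith))]
  -- Jensen helper
  have jensen : ∀ s c : ℝ, (∀ t ∈ Set.Ioo a b, 0 ≤ s * (-(t ^ 2)⁻¹ + ((1 - t) ^ 2)⁻¹) - c) →
      s * (Real.log m - Real.log (1 - m)) - c / 2 * m ^ 2 ≤ s * S - c / 2 * Q := by
    intro s c hc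
    have hconv := kf_convex_aux ha hb1 hc
    have := hconv.map_sum_le (t := Finset.univ) (p := x) (fun i _ => (hw i).le)
      hws (fun i _ => hx i)
    simp only [smul_eq_mul] at this
    have hsum : ∑ i, w i * (s * (Real.log (x i) - Real.log (1 - x i)) - c / 2 * (x i) ^ 2)
        = s * S - c / 2 * Q := by
      simp only [mul_sub]
      rw [Finset.sum_sub_distrib]
      congr 1
      · rw [hS, Finset.mul_sum]; exact Finset.sum_congr rfl fun i _ => by ring
      · rw [hQ, Finset.mul_sum]; exact Finset.sum_congr rfl fun i _ => by ring
    rw [hsum] at this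
    exact this
  -- the two curvature bound constants
  have hca : (-(a ^ 2)⁻¹ + ((1 - a) ^ 2)⁻¹) = -2 * ((1 / 2 - a) / (a * (1 - a)) ^ 2) := by
    have h1 : (a:ℝ) ≠ 0 := ha.ne'
    have h2 : (1:ℝ) - a ≠ 0 := by linarith
    have e : -2 * ((1 / 2 - a) / (a * (1 - a)) ^ 2) = (2*a-1) * ((a*(1-a))^2)⁻¹ := by
      rw [div_eq_mul_inv]; ring
    rw [e, mul_pow, mul_inv, ← inv_pow, ← inv_pow]
    field_simp
    ring
  have hcb : (-(b ^ 2)⁻¹ + ((1 - b) ^ 2)⁻¹) = -2 * ((1 / 2 - b) / (b * (1 - b)) ^ 2) := by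
    have h1 : (b:ℝ) ≠ 0 := hb0.ne'
    have h2 : (1:ℝ) - b ≠ 0 := by linarith
    have e : -2 * ((1 / 2 - b) / (b * (1 - b)) ^ 2) = (2*b-1) * ((b*(1-b))^2)⁻¹ := by
      rw [div_eq_mul_inv]; ring
    rw [e, mul_pow, mul_inv, ← inv_pow, ← inv_pow]
    field_simp
    ring
  have hmono := fun t ht => kf_mono ha hb1 t ht
  -- upper bound (s = 1, c = g''(a))
  have hupper := jensen 1 (-(a ^ 2)⁻¹ + ((1 - a) ^ 2)⁻¹)
    (fun t ht => by linarith [(hmono t ht).1])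
  -- lower bound (s = -1, c = -g''(b))
  have hlower := jensen (-1) (-(-(b ^ 2)⁻¹ + ((1 - b) ^ 2)⁻¹))
    (fun t ht => by linarith [(hmono t ht).2])
  rw [hquot, hprod, ← Real.exp_add, ← Real.exp_add, Real.exp_le_exp, Real.exp_le_exp]
  constructor
  · rw [hcb] at hlower
    ring_nf at hlower ⊢
    linarith [hlower]
  · rw [hca] at hupper
    ring_nf at hupper ⊢
    linarith [hupper]
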